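/- Let n, α, β be real numbers and let a be a twice differentiable real-valued function on (−1,1). Then for every τ ∈ (−1,1), D_{(n,α,β)}( ((1−τ)/2)^{−α} a(τ) ) = ((1−τ)/2)^{−α} · (D_{(n+α,−α,β)} a)(τ), where on the left-hand side the operator D_{(n,α,β)} is applied to the function τ ↦ ((1−τ)/2)^{−α} a(τ). -/

import Mathlib

/-- The Jacobi differential operator
`(D_{(n,α,β)} a)(τ) = (1−τ²)a''(τ) + (β − α − (α+β+2)τ)a'(τ) + n(n+α+β+1)a(τ)`. -/
noncomputable def jacobiD (n α β : ℝ) (a : ℝ → ℝ) (τ : ℝ) : ℝ :=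
  (1 - τ ^ 2) * deriv (deriv a) τ + (β - α - (α + β + 2) * τ) * deriv a τ
    + n * (n + α + β + 1) * a τ

private lemma hw_aux (c : ℝ) {t : ℝ} (ht : t < 1) :
    HasDerivAt (fun t : ℝ => ((1 - t) / 2) ^ c) (c * ((1 - t) / 2) ^ (c - 1) * (-(1/2))) t := by
  have h1 : HasDerivAt (fun t : ℝ => (1 - t) / 2) (-(1/2)) t := by
    have := ((hasDerivAt_id t).const_sub 1).div_const 2
    exact this.congr_deriv (by norm_num)
  have h2 := h1.rpow_const (p := c) (Or.inl (ne_of_gt (show (0:ℝ) < (1 - t) / 2 by linarith)))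
  convert h2 using 1
  ring

/-- Symmetry of the Jacobi operator:
`D_{(n,α,β)}(((1−τ)/2)^{−α} a(τ)) = ((1−τ)/2)^{−α} (D_{(n+α,−α,β)} a)(τ)` on `(−1,1)`. -/
theorem stmt3 (n α β : ℝ) (a : ℝ → ℝ)
    (ha : ∀ τ ∈ Set.Ioo (-1 : ℝ) 1, DifferentiableAt ℝ a τ)
    (ha' : ∀ τ ∈ Set.Ioo (-1 : ℝ) 1, DifferentiableAt ℝ (deriv a) τ) :
    ∀ τ ∈ Set.Ioo (-1 : ℝ) 1,
      jacobiD n α β (fun t => ((1 - t) / 2) ^ (-α) * a t) τ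
        = ((1 - τ) / 2) ^ (-α) * jacobiD (n + α) (-α) β a τ := by
  intro τ hτ
  obtain ⟨hτ1, hτ2⟩ := hτ
  set F : ℝ → ℝ := fun t => ((1 - t) / 2) ^ (-α) * a t with hF
  set g : ℝ → ℝ := fun t =>
      (-α) * ((1 - t) / 2) ^ (-α - 1) * (-(1/2)) * a t
        + ((1 - t) / 2) ^ (-α) * deriv a t with hg
  have hev : ∀ᶠ t in nhds τ, deriv F t = g t := by
    filter_upwards [Ioo_mem_nhds hτ1 hτ2] with t ht
    exact ((hw_aux (-α) ht.2).mul (ha t ht).hasDerivAt).deriv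
  have hd1 : deriv F τ = g τ := by
    exact ((hw_aux (-α) hτ2).mul (ha τ ⟨hτ1, hτ2⟩).hasDerivAt).deriv
  have hd2 : deriv (deriv F) τ = deriv g τ := Filter.EventuallyEq.deriv_eq hev
  have hgd : HasDerivAt g
      (((-α) * ((-α - 1) * ((1 - τ) / 2) ^ (-α - 1 - 1) * (-(1/2))) * (-(1/2))) * a τ
        + (-α) * ((1 - τ) / 2) ^ (-α - 1) * (-(1/2)) * deriv a τ
        + (((-α) * ((1 - τ) / 2) ^ (-α - 1) * (-(1/2))) * deriv a τ
          + ((1 - τ) / 2) ^ (-α) * deriv (deriv a) τ)) τ := by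
    have h1 : HasDerivAt (fun t : ℝ => (-α) * ((1 - t) / 2) ^ (-α - 1) * (-(1/2)) * a t)
        (((-α) * ((-α - 1) * ((1 - τ) / 2) ^ (-α - 1 - 1) * (-(1/2))) * (-(1/2))) * a τ
          + (-α) * ((1 - τ) / 2) ^ (-α - 1) * (-(1/2)) * deriv a τ) τ := by
      have hb : HasDerivAt (fun t : ℝ => (-α) * ((1 - t) / 2) ^ (-α - 1) * (-(1/2)))
          ((-α) * ((-α - 1) * ((1 - τ) / 2) ^ (-α - 1 - 1) * (-(1/2))) * (-(1/2))) τ := by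
        have := ((hw_aux (-α - 1) hτ2).const_mul (-α)).mul_const (-(1/2))
        exact this
      exact hb.mul (ha τ ⟨hτ1, hτ2⟩).hasDerivAt
    have h2 : HasDerivAt (fun t : ℝ => ((1 - t) / 2) ^ (-α) * deriv a t)
        (((-α) * ((1 - τ) / 2) ^ (-α - 1) * (-(1/2))) * deriv a τ
          + ((1 - τ) / 2) ^ (-α) * deriv (deriv a) τ) τ :=
      (hw_aux (-α) hτ2).mul (ha' τ ⟨hτ1, hτ2⟩).hasDerivAt
    exact h1.add h2
  have hdg : deriv g τ =
      ((-α) * ((-α - 1) * ((1 - τ) / 2) ^ (-α - 1 - 1) * (-(1/2))) * (-(1/2))) * a τ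
        + (-α) * ((1 - τ) / 2) ^ (-α - 1) * (-(1/2)) * deriv a τ
        + (((-α) * ((1 - τ) / 2) ^ (-α - 1) * (-(1/2))) * deriv a τ
          + ((1 - τ) / 2) ^ (-α) * deriv (deriv a) τ) := hgd.deriv
  have hxpos : (0:ℝ) < (1 - τ) / 2 := by linarith
  have hxne : ((1 - τ) / 2 : ℝ) ≠ 0 := ne_of_gt hxpos
  have e1 : ((1 - τ) / 2) ^ (-α - 1) = ((1 - τ) / 2) ^ (-α) / ((1 - τ) / 2) := by
    rw [Real.rpow_sub hxpos, Real.rpow_one]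
  have e2 : ((1 - τ) / 2) ^ (-α - 1 - 1) = ((1 - τ) / 2) ^ (-α - 1) / ((1 - τ) / 2) := by
    rw [Real.rpow_sub hxpos, Real.rpow_one]
  simp only [jacobiD, hd1, hd2, hdg]
  simp only [hg, hF, e2, e1]
  have h1τ : (1 : ℝ) - τ ≠ 0 := by linarith
  field_simp
  ring
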